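/- Let 0 < β < 4 and suppose I_2(β) ≤ I_1(β)/2. Then I_ℓ(β) ≤ I_1(β)/ℓ for every integer ℓ ≥ 1, and the inequality is strict for every ℓ ≥ 3. -/

import Mathlib

open MeasureTheory Real
open scoped Real

noncomputable section

/-- The `n`-th modified Bessel function of the first kind,
`I_n(β) = ∫_0^1 e^{β cos(2πu)} cos(2πnu) du`. -/
def besselI (n : ℕ) (β : ℝ) : ℝ :=
  ∫ u in (0 : ℝ)..1, Real.exp (β * Real.cos (2 * π * u)) * Real.cos (2 * π * n * u)

def cInt (k n : ℕ) : ℝ := ∫ u in (0:ℝ)..1, (Real.cos (2*π*u))^k * Real.cos (2*π*n*u)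

lemma cInt_zero_zero : cInt 0 0 = 1 := by
  simp [cInt]

lemma cInt_zero_succ (n : ℕ) : cInt 0 (n+1) = 0 := by
  have h : ∀ u : ℝ, (Real.cos (2*π*u))^0 * Real.cos (2*π*(n+1:ℕ)*u)
      = Real.cos ((2*π*(n+1)) * u) := by
    intro u; push_cast; ring_nf
  rw [cInt]
  rw [intervalIntegral.integral_congr (g := fun u => Real.cos ((2*π*(n+1)) * u)) (by intro u _; exact h u)]
  rw [intervalIntegral.integral_comp_mul_left (fun x => Real.cos x) (by positivity : (2*π*(n+1):ℝ) ≠ 0)]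
  have hs : Real.sin (2*π*(n+1) * 1) = 0 := by
    have : (2*π*(n+1) * 1 : ℝ) = (2*(n+1) : ℕ) * π := by push_cast; ring
    rw [this, Real.sin_nat_mul_pi]
  simp only [integral_cos, Real.sin_zero, mul_zero, sub_zero, smul_eq_mul, mul_one] at *
  rw [hs]; ring

lemma contAux (k m : ℕ) : Continuous fun u : ℝ => (Real.cos (2*π*u))^k * Real.cos (2*π*m*u) := by
  fun_prop

lemma cInt_succ_succ (k n : ℕ) : cInt (k+1) (n+1) = (cInt k n + cInt k (n+2))/2 := by
  have h : ∀ u : ℝ, (Real.cos (2*π*u))^(k+1) * Real.cos (2*π*(n+1:ℕ)*u)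
      = ((Real.cos (2*π*u))^k * Real.cos (2*π*(n:ℕ)*u)
        + (Real.cos (2*π*u))^k * Real.cos (2*π*(n+2:ℕ)*u))/2 := by
    intro u
    have e1 : (2*π*(n+2:ℕ)*u : ℝ) = 2*π*u + 2*π*(n+1:ℕ)*u := by push_cast; ring
    have e2 : (2*π*(n:ℕ)*u : ℝ) = 2*π*(n+1:ℕ)*u - 2*π*u := by push_cast; ring
    rw [e1, e2, Real.cos_add, Real.cos_sub]; ring
  rw [cInt, intervalIntegral.integral_congr (g := fun u => ((Real.cos (2*π*u))^k * Real.cos (2*π*(n:ℕ)*u)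
        + (Real.cos (2*π*u))^k * Real.cos (2*π*(n+2:ℕ)*u))/2) (fun u _ => h u)]
  rw [intervalIntegral.integral_div, intervalIntegral.integral_add
    ((contAux k n).intervalIntegrable 0 1) ((contAux k (n+2)).intervalIntegrable 0 1)]
  rfl

lemma cInt_succ_zero (k : ℕ) : cInt (k+1) 0 = cInt k 1 := by
  have h : ∀ u : ℝ, (Real.cos (2*π*u))^(k+1) * Real.cos (2*π*(0:ℕ)*u)
      = (Real.cos (2*π*u))^k * Real.cos (2*π*(1:ℕ)*u) := by
    intro u; push_cast; rw [mul_zero, zero_mul, Real.cos_zero]; ring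
  rw [cInt, intervalIntegral.integral_congr (g := fun u => (Real.cos (2*π*u))^k * Real.cos (2*π*(1:ℕ)*u)) (fun u _ => h u)]
  rfl

lemma cInt_nonneg (k n : ℕ) : 0 ≤ cInt k n := by
  induction k generalizing n with
  | zero => cases n with
    | zero => rw [cInt_zero_zero]; norm_num
    | succ n => rw [cInt_zero_succ]
  | succ k ih => cases n with
    | zero => rw [cInt_succ_zero]; exact ih 1
    | succ n => rw [cInt_succ_succ]; have := ih n; have := ih (n+2); positivity

lemma cInt_diag (n : ℕ) : (1/2:ℝ)^n ≤ cInt n n := by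
  induction n with
  | zero => rw [cInt_zero_zero]; norm_num
  | succ n ih =>
    rw [cInt_succ_succ]
    have h2 := cInt_nonneg n (n+2)
    calc (1/2:ℝ)^(n+1) = (1/2)^n / 2 := by ring
    _ ≤ (cInt n n + cInt n (n+2))/2 := by linarith

lemma cInt_le_one (k n : ℕ) : cInt k n ≤ 1 := by
  have := intervalIntegral.norm_integral_le_of_norm_le_const (C := 1)
    (f := fun u : ℝ => (Real.cos (2*π*u))^k * Real.cos (2*π*n*u)) (a := 0) (b := 1) ?_
  · rw [show |(1:ℝ) - 0| = 1 by norm_num, mul_one] at this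
    calc cInt k n ≤ ‖cInt k n‖ := le_abs_self _
    _ ≤ 1 := this
  · intro x _
    rw [norm_mul, norm_pow]
    calc ‖Real.cos (2*π*x)‖^k * ‖Real.cos (2*π*n*x)‖ ≤ 1^k * 1 := by
          apply mul_le_mul (pow_le_pow_left₀ (norm_nonneg _) (Real.abs_cos_le_one _) k)
            (Real.abs_cos_le_one _) (abs_nonneg _) (by norm_num)
    _ = 1 := by norm_num

lemma besselI_hasSum (n : ℕ) (β : ℝ) :
    HasSum (fun k => β^k / k.factorial * cInt k n) (besselI n β) := by
  set μ := volume.restrict (Set.Ioc (0:ℝ) 1) with hμ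
  set F : ℕ → ℝ → ℝ := fun k u => β^k / k.factorial * ((Real.cos (2*π*u))^k * Real.cos (2*π*n*u)) with hF
  have hcont : ∀ k, Continuous (F k) := fun k => (continuous_const.mul (contAux k n))
  have hFint : ∀ k, Integrable (F k) μ := fun k => ((hcont k).integrableOn_Ioc)
  have hbound : ∀ k u, ‖F k u‖ ≤ |β|^k / k.factorial := by
    intro k u
    rw [hF, norm_mul, norm_mul, norm_pow]
    have h1 : ‖Real.cos (2*π*u)‖^k ≤ 1 := pow_le_one₀ (norm_nonneg _) (Real.abs_cos_le_one _)
    have h2 : ‖Real.cos (2*π*(n:ℝ)*u)‖ ≤ 1 := Real.abs_cos_le_one _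
    have h3 : ‖β^k / (k.factorial:ℝ)‖ = |β|^k / k.factorial := by
      rw [Real.norm_eq_abs, abs_div, abs_pow, Nat.abs_cast]
    rw [h3]
    calc |β|^k / k.factorial * (‖Real.cos (2*π*u)‖^k * ‖Real.cos (2*π*(n:ℝ)*u)‖)
        ≤ |β|^k / k.factorial * (1*1) := by
          apply mul_le_mul_of_nonneg_left _ (by positivity)
          exact mul_le_mul h1 h2 (norm_nonneg _) (by norm_num)
    _ = |β|^k / k.factorial := by ring
  have hμuniv : (μ Set.univ).toReal = 1 := by
    rw [hμ, Measure.restrict_apply_univ, Real.volume_Ioc]; norm_num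
  haveI : IsFiniteMeasure μ := by
    constructor
    rw [hμ, Measure.restrict_apply_univ, Real.volume_Ioc]
    norm_num
  have hnorm : ∀ k, ∫ u, ‖F k u‖ ∂μ ≤ |β|^k / k.factorial := by
    intro k
    calc ∫ u, ‖F k u‖ ∂μ ≤ ∫ _u, (|β|^k / k.factorial : ℝ) ∂μ := by
          apply integral_mono_of_nonneg (Filter.Eventually.of_forall fun u => norm_nonneg _)
            (integrable_const _) (Filter.Eventually.of_forall (hbound k))
    _ = |β|^k / k.factorial := by rw [integral_const, measureReal_def, hμuniv, one_smul]
  have hsum : Summable fun k => ∫ u, ‖F k u‖ ∂μ :=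
    Summable.of_nonneg_of_le (fun k => integral_nonneg fun u => norm_nonneg _) hnorm
      (Real.summable_pow_div_factorial |β|)
  have key := MeasureTheory.hasSum_integral_of_summable_integral_norm hFint hsum
  have hpt : ∀ u : ℝ, ∑' k, F k u = Real.exp (β * Real.cos (2*π*u)) * Real.cos (2*π*n*u) := by
    intro u
    have h1 : (fun k => F k u) = fun k => (β * Real.cos (2*π*u))^k / k.factorial * Real.cos (2*π*n*u) := by
      funext k; rw [hF]; rw [mul_pow]; ring
    rw [h1, tsum_mul_right, Real.exp_eq_exp_ℝ, NormedSpace.exp_eq_tsum_div]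
  have hi : ∀ k, ∫ u, F k u ∂μ = β^k / k.factorial * cInt k n := by
    intro k
    rw [hF, cInt, intervalIntegral.integral_of_le (by norm_num : (0:ℝ) ≤ 1)]
    exact integral_const_mul _ _
  have hb : ∫ u, (∑' k, F k u) ∂μ = besselI n β := by
    rw [besselI, intervalIntegral.integral_of_le (by norm_num : (0:ℝ) ≤ 1)]
    exact integral_congr_ae (Filter.Eventually.of_forall fun u => hpt u)
  rw [← hb]
  rw [show (fun k => β^k / k.factorial * cInt k n) = fun k => ∫ u, F k u ∂μ from funext fun k => (hi k).symm]
  exact key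

lemma besselI_pos (n : ℕ) {β : ℝ} (hβ : 0 < β) : 0 < besselI n β := by
  have h := besselI_hasSum n β
  have hle : β^n / n.factorial * cInt n n ≤ besselI n β := by
    apply le_hasSum h n
    intro k _
    have := cInt_nonneg k n
    positivity
  have hlt : 0 < β^n / n.factorial * cInt n n := by
    have h1 := cInt_diag n
    have h2 : (0:ℝ) < (1/2)^n := by positivity
    have : (0:ℝ) < β^n / n.factorial := by positivity
    nlinarith
  linarith

lemma besselI_rec (n : ℕ) {β : ℝ} (hβ : 0 < β) :
    2*((n:ℝ)+1) * besselI (n+1) β = β * (besselI n β - besselI (n+2) β) := by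
  set F : ℝ → ℝ := fun u => Real.exp (β * Real.cos (2*π*u)) * Real.sin (2*π*(n+1:ℕ)*u) with hF
  set G : ℝ → ℝ := fun u =>
    Real.exp (β * Real.cos (2*π*u)) * (β * (-Real.sin (2*π*u) * (2*π))) * Real.sin (2*π*(n+1:ℕ)*u)
    + Real.exp (β * Real.cos (2*π*u)) * (Real.cos (2*π*(n+1:ℕ)*u) * (2*π*(n+1:ℕ))) with hG
  have hderiv : ∀ u : ℝ, HasDerivAt F (G u) u := by
    intro u
    have h1 : HasDerivAt (fun u : ℝ => 2*π*u) (2*π) u := by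
      simpa using (hasDerivAt_id u).const_mul (2*π)
    have h1' : HasDerivAt (fun u : ℝ => 2*π*(n+1:ℕ)*u) (2*π*(n+1:ℕ)) u := by
      simpa using (hasDerivAt_id u).const_mul (2*π*(n+1:ℕ))
    exact ((h1.cos.const_mul β).exp).mul h1'.sin
  have hGcont : Continuous G := by rw [hG]; fun_prop
  have hFTC : ∫ u in (0:ℝ)..1, G u = F 1 - F 0 := by
    exact intervalIntegral.integral_eq_sub_of_hasDerivAt (fun u _ => hderiv u)
      (hGcont.intervalIntegrable 0 1)
  have hF1 : F 1 = 0 := by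
    rw [hF]
    have : (2*π*(n+1:ℕ)*1 : ℝ) = (2*(n+1):ℕ) * π := by push_cast; ring
    simp only [this, Real.sin_nat_mul_pi, mul_zero]
  have hF0 : F 0 = 0 := by rw [hF]; simp
  have hzero : ∫ u in (0:ℝ)..1, G u = 0 := by rw [hFTC, hF1, hF0, sub_zero]
  have contB : ∀ m : ℕ, Continuous fun u : ℝ => Real.exp (β * Real.cos (2*π*u)) * Real.cos (2*π*m*u) := by
    intro m; fun_prop
  have hGeq : ∀ u : ℝ, G u =
      (-(π*β)) * (Real.exp (β * Real.cos (2*π*u)) * Real.cos (2*π*(n:ℕ)*u))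
      + ((π*β) * (Real.exp (β * Real.cos (2*π*u)) * Real.cos (2*π*(n+2:ℕ)*u))
      + (2*π*((n:ℝ)+1)) * (Real.exp (β * Real.cos (2*π*u)) * Real.cos (2*π*(n+1:ℕ)*u))) := by
    intro u
    rw [hG]
    have e1 : (2*π*(n:ℕ)*u : ℝ) = 2*π*(n+1:ℕ)*u - 2*π*u := by push_cast; ring
    have e2 : (2*π*(n+2:ℕ)*u : ℝ) = 2*π*(n+1:ℕ)*u + 2*π*u := by push_cast; ring
    rw [e1, e2, Real.cos_sub, Real.cos_add]
    push_cast
    ring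
  have hsplit : ∫ u in (0:ℝ)..1, G u =
      (-(π*β)) * besselI n β + ((π*β) * besselI (n+2) β + (2*π*((n:ℝ)+1)) * besselI (n+1) β) := by
    rw [intervalIntegral.integral_congr (fun u _ => hGeq u)]
    rw [intervalIntegral.integral_add (((contB n).intervalIntegrable 0 1).const_mul _)
      ((((contB (n+2)).intervalIntegrable 0 1).const_mul _).add
        (((contB (n+1)).intervalIntegrable 0 1).const_mul _)),
      intervalIntegral.integral_add (((contB (n+2)).intervalIntegrable 0 1).const_mul _)
        (((contB (n+1)).intervalIntegrable 0 1).const_mul _),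
      intervalIntegral.integral_const_mul, intervalIntegral.integral_const_mul,
      intervalIntegral.integral_const_mul]
    rfl
  rw [hsplit] at hzero
  have hπ := Real.pi_pos
  have : π * (-β * besselI n β + β * besselI (n+2) β + 2*((n:ℝ)+1) * besselI (n+1) β) = 0 := by
    linarith [hzero]
  have h2 : -β * besselI n β + β * besselI (n+2) β + 2*((n:ℝ)+1) * besselI (n+1) β = 0 := by
    rcases mul_eq_zero.1 this with h | h
    · exact absurd h (ne_of_gt hπ)
    · exact h
  linarith


/-- **Decay of Bessel coefficients below the tricritical point.** If `0 < β < 4` and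
`I_2(β) ≤ I_1(β)/2` (equivalently `β ≤ β_*`), then `I_ℓ(β) ≤ I_1(β)/ℓ` for every
`ℓ ≥ 1`, strictly for every `ℓ ≥ 3`. -/
theorem besselI_decay (β : ℝ) (hβ0 : 0 < β) (hβ4 : β < 4)
    (h2 : besselI 2 β ≤ besselI 1 β / 2) :
    (∀ ℓ : ℕ, 1 ≤ ℓ → besselI ℓ β ≤ besselI 1 β / ℓ) ∧
    (∀ ℓ : ℕ, 3 ≤ ℓ → besselI ℓ β < besselI 1 β / ℓ) := by
  have hpos : ∀ n : ℕ, 0 < besselI n β := fun n => besselI_pos n hβ0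
  -- key strict bound: I_{n+2} < β/(2(n+2)) I_{n+1}
  have key : ∀ n : ℕ, 2*((n:ℝ)+2) * besselI (n+2) β < β * besselI (n+1) β := by
    intro n
    have hr := besselI_rec (n+1) hβ0
    push_cast at hr
    have h3 := hpos (n+3)
    nlinarith [hr, mul_pos hβ0 h3]
  -- H : I_{n+2} ≤ I_1/(n+2), strict for n ≥ 1
  have H : ∀ n : ℕ, besselI (n+2) β ≤ besselI 1 β / ((n:ℝ)+2) ∧
      (1 ≤ n → besselI (n+2) β < besselI 1 β / ((n:ℝ)+2)) := by
    intro n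
    induction n with
    | zero =>
      refine ⟨by norm_num [h2], by omega⟩
    | succ n ih =>
      have hk := key n
      have hIn2 := hpos (n+2)
      have hIn3 := hpos (n+3)
      have hprev : ((n:ℝ)+2) * besselI (n+2) β ≤ besselI 1 β := by
        have := ih.1
        rw [le_div_iff₀ (by positivity)] at this
        linarith [this]
      have hstrict : besselI (n+3) β < besselI 1 β / ((n:ℝ)+3) := by
        rw [lt_div_iff₀ (by positivity : (0:ℝ) < (n:ℝ)+3)]
        have h1 : β * besselI (n+2) β < 4 * besselI (n+2) β :=
          mul_lt_mul_of_pos_right hβ4 hIn2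
        have h2' : 2*((n:ℝ)+3) * besselI (n+3) β < β * besselI (n+2) β := by
          have := key (n+1); push_cast at this ⊢
          convert this using 2 <;> push_cast <;> ring_nf
        have hn : 2 * besselI (n+2) β ≤ ((n:ℝ)+2) * besselI (n+2) β := by
          have : (0:ℝ) ≤ (n:ℝ) := Nat.cast_nonneg n
          nlinarith
        nlinarith
      constructor
      · have := hstrict
        push_cast
        convert (show besselI (n+3) β ≤ besselI 1 β / ((n:ℝ)+3) from le_of_lt this) using 2 <;> push_cast <;> ring_nf
      · intro _
        push_cast
        convert hstrict using 2 <;> push_cast <;> ring_nf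
  constructor
  · intro ℓ hℓ
    match ℓ, hℓ with
    | 1, _ => simpa using le_refl (besselI 1 β)
    | (n+2), _ =>
      have := (H n).1
      push_cast
      convert this using 2 <;> push_cast <;> ring_nf
  · intro ℓ hℓ
    match ℓ, hℓ with
    | (n+3), _ =>
      have := (H (n+1)).2 (by omega)
      push_cast
      convert this using 2 <;> push_cast <;> ring_nf
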